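/- Let α ∈ (0, 1]. Then for every t ∈ ℕ, the quantity ψ_1(t+1, α) := Σ_{i=1}^{t} (1/i²) · (Π_{k=i+1}^{t}(1 − α/k))² satisfies: ψ_1(t+1, α) ≤ (4/(1−2α))·(t+1)^{−2α} if α ∈ (0, 1/2); ψ_1(t+1, α) ≤ 4·(t+1)^{−1}·ln(t+1) if α = 1/2; ψ_1(t+1, α) ≤ (6/(2α−1))·(t+1)^{−1} if α ∈ (1/2, 1); and ψ_1(t+1, α) ≤ 6·(t+1)^{−1} if α = 1. -/

import Mathlib

open Finset Real
-- Bernoulli for negative exponent in (-1,0]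
lemma bern_neg {x p : ℝ} (hx : 0 < x) (hx1 : x ≤ 1) (hp0 : -1 ≤ p) (hp : p ≤ 0) :
    1 + p * (x - 1) ≤ x ^ p := by
  have hu : 0 ≤ p * (x - 1) := by nlinarith
  have hb : x ^ (-p) ≤ 1 + (-p) * (x - 1) := by
    have := rpow_one_add_le_one_add_mul_self (s := x - 1) (by linarith) (p := -p)
      (by linarith) (by linarith)
    simpa using this
  have hxp : x ^ p = (x ^ (-p))⁻¹ := by
    rw [← Real.rpow_neg hx.le, neg_neg]
  have hpos : 0 < x ^ (-p) := Real.rpow_pos_of_pos hx _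
  rw [hxp, ← one_div, le_div_iff₀ hpos]
  nlinarith [hb, hu]

-- key step inequalities
lemma step_neg {p : ℝ} (hp0 : -1 ≤ p) (hp : p ≤ 0) {n : ℝ} (hn : 2 ≤ n) :
    (-p) * n ^ (p - 1) ≤ (n - 1) ^ p - n ^ p := by
  have hn0 : (0:ℝ) < n := by linarith
  have hx : (0:ℝ) < (n - 1) / n := by apply div_pos <;> linarith
  have hx1 : (n - 1) / n ≤ 1 := by rw [div_le_one hn0]; linarith
  have hb := bern_neg hx hx1 hp0 hp
  have he : (n - 1) / n - 1 = -(1 / n) := by field_simp; ring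
  rw [he] at hb
  have hr : ((n - 1) / n) ^ p = (n - 1) ^ p / n ^ p :=
    Real.div_rpow (by linarith : (0:ℝ) ≤ n - 1) hn0.le p
  rw [hr] at hb
  have hnp : 0 < n ^ p := Real.rpow_pos_of_pos hn0 _
  have h3 : n ^ (p - 1) = n ^ p / n := by
    rw [Real.rpow_sub hn0, Real.rpow_one]
  rw [h3]
  rw [le_div_iff₀ hnp] at hb
  have : (1 + p * -(1 / n)) * n ^ p = n ^ p - p * (n ^ p / n) := by
    field_simp; ring
  nlinarith [this]

lemma step_pos {p : ℝ} (hp0 : 0 ≤ p) (hp : p ≤ 1) {n : ℝ} (hn : 2 ≤ n) :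
    p * n ^ (p - 1) ≤ n ^ p - (n - 1) ^ p := by
  have hn0 : (0:ℝ) < n := by linarith
  have hb : ((n - 1) / n) ^ p ≤ 1 + p * -(1 / n) := by
    have := rpow_one_add_le_one_add_mul_self (s := -(1/n)) (by
      have : 1 / n ≤ 1 := by rw [div_le_one hn0]; linarith
      linarith) hp0 hp
    have he : (1 : ℝ) + -(1 / n) = (n - 1) / n := by field_simp; ring
    rwa [he] at this
  have hr : ((n - 1) / n) ^ p = (n - 1) ^ p / n ^ p :=
    Real.div_rpow (by linarith : (0:ℝ) ≤ n - 1) hn0.le p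
  rw [hr] at hb
  have hnp : 0 < n ^ p := Real.rpow_pos_of_pos hn0 _
  have h3 : n ^ (p - 1) = n ^ p / n := by
    rw [Real.rpow_sub hn0, Real.rpow_one]
  rw [h3]
  rw [div_le_iff₀ hnp] at hb
  have : (1 + p * -(1 / n)) * n ^ p = n ^ p - p * (n ^ p / n) := by
    field_simp; ring
  nlinarith [this]

lemma sum_neg {p : ℝ} (hp0 : -1 ≤ p) (hp : p < 0) (t : ℕ) (ht : 1 ≤ t) :
    ∑ i ∈ Finset.Icc 2 t, (i : ℝ) ^ (p - 1) ≤ (1 - (t : ℝ) ^ p) / (-p) := by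
  induction t, ht using Nat.le_induction with
  | base => simp
  | succ t ht ih =>
    rw [Finset.sum_Icc_succ_top (by omega : 2 ≤ t + 1)]
    have hstep := step_neg hp0 hp.le (n := (t : ℝ) + 1) (by exact_mod_cast by omega : (2:ℝ) ≤ (t:ℝ) + 1)
    have hpn : 0 < -p := by linarith
    push_cast
    calc ∑ i ∈ Finset.Icc 2 t, (i : ℝ) ^ (p - 1) + ((t:ℝ) + 1) ^ (p - 1)
        ≤ (1 - (t : ℝ) ^ p) / (-p) + (((t:ℝ) + 1 - 1) ^ p - ((t:ℝ)+1) ^ p) / (-p) := by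
          apply add_le_add ih
          rw [le_div_iff₀ hpn]; linarith [hstep]
      _ = (1 - ((t:ℝ) + 1) ^ p) / (-p) := by
          rw [← add_div]; ring_nf

lemma sum_pos {p : ℝ} (hp0 : 0 < p) (hp : p ≤ 1) (t : ℕ) (ht : 1 ≤ t) :
    ∑ i ∈ Finset.Icc 2 t, (i : ℝ) ^ (p - 1) ≤ ((t : ℝ) ^ p - 1) / p := by
  induction t, ht using Nat.le_induction with
  | base => simp
  | succ t ht ih =>
    rw [Finset.sum_Icc_succ_top (by omega : 2 ≤ t + 1)]
    have hstep := step_pos hp0.le hp (n := (t : ℝ) + 1)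
      (by exact_mod_cast by omega : (2:ℝ) ≤ (t:ℝ) + 1)
    push_cast
    calc ∑ i ∈ Finset.Icc 2 t, (i : ℝ) ^ (p - 1) + ((t:ℝ) + 1) ^ (p - 1)
        ≤ ((t : ℝ) ^ p - 1) / p + (((t:ℝ)+1) ^ p - ((t:ℝ) + 1 - 1) ^ p) / p := by
          apply add_le_add ih
          rw [le_div_iff₀ hp0]; linarith [hstep]
      _ = (((t:ℝ) + 1) ^ p - 1) / p := by
          rw [← add_div]; ring_nf

lemma sum_harm (t : ℕ) :
    ∑ i ∈ Finset.Icc 1 t, ((i : ℝ))⁻¹ ≤ 2 * Real.log ((t : ℝ) + 1) := by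
  induction t with
  | zero => simp
  | succ t ih =>
    rw [Finset.sum_Icc_succ_top (by omega : 1 ≤ t + 1)]
    have hlog : (1 : ℝ) / ((t:ℝ) + 2) ≤ Real.log ((t:ℝ) + 2) - Real.log ((t:ℝ) + 1) := by
      have h1 : Real.log (((t:ℝ) + 1) / ((t:ℝ) + 2)) ≤ ((t:ℝ) + 1) / ((t:ℝ) + 2) - 1 :=
        Real.log_le_sub_one_of_pos (by positivity)
      have h2 : Real.log (((t:ℝ) + 1) / ((t:ℝ) + 2)) =
          Real.log ((t:ℝ) + 1) - Real.log ((t:ℝ) + 2) := by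
        rw [Real.log_div (by positivity) (by positivity)]
      have h3 : ((t:ℝ) + 1) / ((t:ℝ) + 2) - 1 = -(1 / ((t:ℝ) + 2)) := by
        field_simp; ring
      rw [h2, h3] at h1; linarith
    have hinv : ((t:ℝ) + 1)⁻¹ ≤ 2 / ((t:ℝ) + 2) := by
      rw [inv_eq_one_div, div_le_div_iff₀ (by positivity) (by positivity)]
      linarith
    push_cast
    have h4 : (t:ℝ) + 1 + 1 = (t:ℝ) + 2 := by ring
    rw [h4]
    calc ∑ i ∈ Finset.Icc 1 t, ((i : ℝ))⁻¹ + ((t:ℝ) + 1)⁻¹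
        ≤ 2 * Real.log ((t:ℝ) + 1) + 2 / ((t:ℝ) + 2) := add_le_add ih hinv
      _ ≤ 2 * Real.log ((t:ℝ) + 2) := by
          have h5 : 2 / ((t:ℝ) + 2) = 2 * (1 / ((t:ℝ) + 2)) := by ring
          linarith

lemma factor_le {α : ℝ} (hα0 : 0 ≤ α) {k : ℝ} (hk : 1 ≤ k) :
    1 - α / k ≤ (k / (k + 1)) ^ α := by
  have hk0 : (0:ℝ) < k := by linarith
  have h1 : 1 - α / k ≤ Real.exp (-(α / k)) := by
    have := Real.add_one_le_exp (-(α / k)); linarith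
  have h2 : Real.exp (-(α / k)) = (Real.exp (-(1 / k))) ^ α := by
    rw [← Real.exp_mul]; ring_nf
  have h3 : Real.exp (-(1 / k)) ≤ k / (k + 1) := by
    have he : 1 / k + 1 ≤ Real.exp (1 / k) := by
      have := Real.add_one_le_exp (1 / k); linarith
    rw [Real.exp_neg]
    have hpos : (0:ℝ) < 1 / k + 1 := by positivity
    have : (Real.exp (1/k))⁻¹ ≤ (1/k + 1)⁻¹ := by
      apply inv_anti₀ hpos he
    apply this.trans
    rw [inv_eq_one_div, div_le_div_iff₀ (by positivity) (by positivity)]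
    field_simp
    nlinarith
  calc 1 - α / k ≤ Real.exp (-(α/k)) := h1
    _ = (Real.exp (-(1/k))) ^ α := h2
    _ ≤ (k / (k+1)) ^ α := Real.rpow_le_rpow (Real.exp_nonneg _) h3 hα0

lemma prod_tel (i : ℕ) : ∀ t : ℕ, i ≤ t →
    ∏ k ∈ Finset.Ioc i t, ((k:ℝ) / ((k:ℝ) + 1)) = ((i:ℝ) + 1) / ((t:ℝ) + 1) := by
  intro t
  intro h
  induction t, h using Nat.le_induction with
  | base =>
    rw [Finset.Ioc_self, Finset.prod_empty, div_self (by positivity)]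
  | succ t ht ih =>
    rw [Finset.prod_Ioc_succ_top (by omega : i ≤ t), ih]
    push_cast
    have h1 : (t:ℝ) + 1 > 0 := by positivity
    have h2 : (t:ℝ) + 1 + 1 > 0 := by positivity
    field_simp

lemma prod_nonneg_le {α : ℝ} (hα0 : 0 < α) (hα1 : α ≤ 1) {i t : ℕ} (hi : 1 ≤ i) (hit : i ≤ t) :
    0 ≤ ∏ k ∈ Finset.Ioc i t, (1 - α / (k:ℝ)) ∧
    ∏ k ∈ Finset.Ioc i t, (1 - α / (k:ℝ)) ≤ (((i:ℝ) + 1) / ((t:ℝ) + 1)) ^ α := by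
  have hterm : ∀ k ∈ Finset.Ioc i t, 0 ≤ 1 - α / (k:ℝ) := by
    intro k hk
    rw [Finset.mem_Ioc] at hk
    have hk2 : 2 ≤ k := by omega
    have hk2' : (2:ℝ) ≤ (k:ℝ) := by exact_mod_cast hk2
    have : α / (k:ℝ) ≤ 1 := by
      rw [div_le_one (by linarith)]; linarith
    linarith
  constructor
  · exact Finset.prod_nonneg hterm
  · calc ∏ k ∈ Finset.Ioc i t, (1 - α / (k:ℝ))
        ≤ ∏ k ∈ Finset.Ioc i t, ((k:ℝ) / ((k:ℝ) + 1)) ^ α := by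
          apply Finset.prod_le_prod hterm
          intro k hk
          rw [Finset.mem_Ioc] at hk
          have : (1:ℝ) ≤ (k:ℝ) := by exact_mod_cast by omega
          exact factor_le hα0.le this
      _ = (∏ k ∈ Finset.Ioc i t, ((k:ℝ) / ((k:ℝ) + 1))) ^ α := by
          rw [← Real.finset_prod_rpow]
          intro k hk; positivity
      _ = (((i:ℝ) + 1) / ((t:ℝ) + 1)) ^ α := by rw [prod_tel i t hit]

section helper
variable {α : ℝ}

lemma Icc_split (t : ℕ) (ht : 1 ≤ t) : Finset.Icc 1 t = insert 1 (Finset.Icc 2 t) := by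
  ext x; simp only [Finset.mem_Icc, Finset.mem_insert]; omega

lemma one_notmem : (1 : ℕ) ∉ Finset.Icc 2 t := by simp


lemma term_bound (hα0 : 0 < α) (hα1 : α ≤ 1) {i t : ℕ} (hi : 1 ≤ i) (hit : i ≤ t) :
    (1 / (i:ℝ)^2) * (∏ k ∈ Finset.Ioc i t, (1 - α / (k:ℝ)))^2 ≤
    ((i:ℝ)+1)^(2*α) / (i:ℝ)^2 * ((t:ℝ)+1)^(-(2*α)) := by
  obtain ⟨hP0, hPle⟩ := prod_nonneg_le hα0 hα1 hi hit
  have hi0 : (0:ℝ) < (i:ℝ) := by exact_mod_cast hi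
  have hQ : (0:ℝ) ≤ ((i:ℝ)+1)/((t:ℝ)+1) := by positivity
  have h2 : (∏ k ∈ Finset.Ioc i t, (1 - α / (k:ℝ)))^2 ≤
      ((((i:ℝ)+1)/((t:ℝ)+1))^α)^2 := pow_le_pow_left₀ hP0 hPle 2
  have h3 : ((((i:ℝ)+1)/((t:ℝ)+1))^α)^(2:ℕ) = (((i:ℝ)+1)/((t:ℝ)+1))^(2*α) := by
    rw [← Real.rpow_natCast (_ ^ α) 2, ← Real.rpow_mul hQ]
    norm_num [mul_comm]
  have h4 : (((i:ℝ)+1)/((t:ℝ)+1))^(2*α) = ((i:ℝ)+1)^(2*α) * ((t:ℝ)+1)^(-(2*α)) := by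
    rw [Real.div_rpow (by positivity) (by positivity), Real.rpow_neg (by positivity),
      div_eq_mul_inv]
  calc (1 / (i:ℝ)^2) * (∏ k ∈ Finset.Ioc i t, (1 - α / (k:ℝ)))^2
      ≤ (1 / (i:ℝ)^2) * (((i:ℝ)+1)^(2*α) * ((t:ℝ)+1)^(-(2*α))) := by
        rw [← h4, ← h3]
        exact mul_le_mul_of_nonneg_left h2 (by positivity)
    _ = ((i:ℝ)+1)^(2*α) / (i:ℝ)^2 * ((t:ℝ)+1)^(-(2*α)) := by ring

lemma psi_le_sum_mul (hα0 : 0 < α) (hα1 : α ≤ 1) (t : ℕ) :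
    (∑ i ∈ Finset.Icc 1 t, (1 / (i:ℝ)^2) * (∏ k ∈ Finset.Ioc i t, (1 - α / (k:ℝ)))^2)
      ≤ (∑ i ∈ Finset.Icc 1 t, ((i:ℝ)+1)^(2*α) / (i:ℝ)^2) * ((t:ℝ)+1)^(-(2*α)) := by
  rw [Finset.sum_mul]
  apply Finset.sum_le_sum
  intro i hi
  rw [Finset.mem_Icc] at hi
  exact term_bound hα0 hα1 hi.1 hi.2

end helper

section cases
variable {α : ℝ}

lemma rpow_div_le_two_mul (hα0 : 0 < α) (hαh : 2*α ≤ 1) {i : ℕ} (hi : 1 ≤ i) :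
    ((i:ℝ)+1)^(2*α) / (i:ℝ)^2 ≤ 2 * (i:ℝ)^(2*α-2) := by
  have hi0 : (0:ℝ) < (i:ℝ) := by exact_mod_cast hi
  have hi1 : (1:ℝ) ≤ (i:ℝ) := by exact_mod_cast hi
  have h1 : ((i:ℝ)+1)^(2*α) ≤ 2 * (i:ℝ)^(2*α) := by
    calc ((i:ℝ)+1)^(2*α) ≤ (2*(i:ℝ))^(2*α) := by
          apply Real.rpow_le_rpow (by positivity) (by linarith) (by positivity)
      _ = 2^(2*α) * (i:ℝ)^(2*α) := Real.mul_rpow (by norm_num) hi0.le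
      _ ≤ 2 * (i:ℝ)^(2*α) := by
          have : (2:ℝ)^(2*α) ≤ 2^(1:ℝ) :=
            Real.rpow_le_rpow_of_exponent_le (by norm_num) hαh
          rw [Real.rpow_one] at this
          exact mul_le_mul_of_nonneg_right this (by positivity)
  have h2 : (i:ℝ)^(2*α-2) = (i:ℝ)^(2*α) / (i:ℝ)^2 := by
    rw [show ((i:ℝ)^2 : ℝ) = (i:ℝ)^((2:ℕ):ℝ) from (Real.rpow_natCast _ 2).symm,
      ← Real.rpow_sub hi0]
    norm_num
  rw [h2, ← mul_div_assoc]
  gcongr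

lemma rpow_div_le_94 (hα0 : 0 < α) (hα1 : α ≤ 1) {i : ℕ} (hi : 2 ≤ i) :
    ((i:ℝ)+1)^(2*α) / (i:ℝ)^2 ≤ (9/4) * (i:ℝ)^(2*α-2) := by
  have hi0 : (0:ℝ) < (i:ℝ) := by exact_mod_cast by omega
  have hi2 : (2:ℝ) ≤ (i:ℝ) := by exact_mod_cast hi
  have h1 : ((i:ℝ)+1)^(2*α) ≤ (9/4) * (i:ℝ)^(2*α) := by
    calc ((i:ℝ)+1)^(2*α) ≤ ((3/2)*(i:ℝ))^(2*α) := by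
          apply Real.rpow_le_rpow (by positivity) (by linarith) (by positivity)
      _ = (3/2)^(2*α) * (i:ℝ)^(2*α) := Real.mul_rpow (by norm_num) hi0.le
      _ ≤ (9/4) * (i:ℝ)^(2*α) := by
          have h32 : ((3:ℝ)/2)^(2*α) ≤ (3/2)^((2:ℕ):ℝ) :=
            Real.rpow_le_rpow_of_exponent_le (by norm_num) (by push_cast; linarith)
          rw [Real.rpow_natCast] at h32
          norm_num at h32
          exact mul_le_mul_of_nonneg_right h32 (by positivity)
  have h2 : (i:ℝ)^(2*α-2) = (i:ℝ)^(2*α) / (i:ℝ)^2 := by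
    rw [show ((i:ℝ)^2 : ℝ) = (i:ℝ)^((2:ℕ):ℝ) from (Real.rpow_natCast _ 2).symm,
      ← Real.rpow_sub hi0]
    norm_num
  rw [h2, ← mul_div_assoc]
  gcongr

lemma sum_case1 (hα0 : 0 < α) (hαh : α < 1/2) (t : ℕ) (ht : 1 ≤ t) :
    ∑ i ∈ Finset.Icc 1 t, ((i:ℝ)+1)^(2*α)/(i:ℝ)^2 ≤ 2 + 2/(1-2*α) := by
  have hc : (0:ℝ) < 1 - 2*α := by linarith
  calc ∑ i ∈ Finset.Icc 1 t, ((i:ℝ)+1)^(2*α)/(i:ℝ)^2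
      ≤ ∑ i ∈ Finset.Icc 1 t, 2 * (i:ℝ)^(2*α-2) := by
        apply Finset.sum_le_sum
        intro i hi
        rw [Finset.mem_Icc] at hi
        exact rpow_div_le_two_mul hα0 (by linarith) hi.1
    _ = 2 * (1:ℝ)^(2*α-2) + ∑ i ∈ Finset.Icc 2 t, 2 * (i:ℝ)^(2*α-2) := by
        rw [Icc_split t ht, Finset.sum_insert one_notmem]
        norm_num
    _ ≤ 2 + 2 * ((1 - (t:ℝ)^(2*α-1))/(1-2*α)) := by
        rw [Real.one_rpow, ← Finset.mul_sum]
        have hs := sum_neg (p := 2*α-1) (by linarith) (by linarith) t ht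
        rw [show (2*α-1-1 : ℝ) = 2*α-2 by ring, show (-(2*α-1) : ℝ) = 1-2*α by ring] at hs
        nlinarith [hs]
    _ ≤ 2 + 2/(1-2*α) := by
        have hT : (0:ℝ) ≤ (t:ℝ)^(2*α-1) := Real.rpow_nonneg (by positivity) _
        have : (1 - (t:ℝ)^(2*α-1))/(1-2*α) ≤ 1/(1-2*α) := by
          gcongr
          linarith
        have h22 : 2/(1-2*α) = 2*(1/(1-2*α)) := by ring
        linarith

lemma sum_case2 (t : ℕ) :
    ∑ i ∈ Finset.Icc 1 t, ((i:ℝ)+1)^(1:ℝ)/(i:ℝ)^2 ≤ 4 * Real.log ((t:ℝ)+1) := by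
  calc ∑ i ∈ Finset.Icc 1 t, ((i:ℝ)+1)^(1:ℝ)/(i:ℝ)^2
      ≤ ∑ i ∈ Finset.Icc 1 t, 2 * ((i:ℝ))⁻¹ := by
        apply Finset.sum_le_sum
        intro i hi
        rw [Finset.mem_Icc] at hi
        have hi0 : (0:ℝ) < (i:ℝ) := by exact_mod_cast hi.1
        have hi1 : (1:ℝ) ≤ (i:ℝ) := by exact_mod_cast hi.1
        rw [Real.rpow_one, div_le_iff₀ (by positivity)]
        have he : 2 * ((i:ℝ))⁻¹ * (i:ℝ)^2 = 2*(i:ℝ) := by field_simp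
        rw [he]
        linarith
    _ = 2 * ∑ i ∈ Finset.Icc 1 t, ((i:ℝ))⁻¹ := by rw [← Finset.mul_sum]
    _ ≤ 4 * Real.log ((t:ℝ)+1) := by
        have := sum_harm t
        linarith

lemma sum_case3 (hαh : 1/2 < α) (hα1 : α ≤ 1) (t : ℕ) (ht : 1 ≤ t) :
    ∑ i ∈ Finset.Icc 1 t, ((i:ℝ)+1)^(2*α)/(i:ℝ)^2
      ≤ 4 + (9/4) * ((((t:ℝ)+1)^(2*α-1) - 1)/(2*α-1)) := by
  have hβ : (0:ℝ) < 2*α - 1 := by linarith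
  rw [Icc_split t ht, Finset.sum_insert one_notmem]
  have h1 : (((1:ℕ):ℝ)+1)^(2*α)/((1:ℕ):ℝ)^2 ≤ 4 := by
    have h20 : ((2:ℝ))^(2*α) ≤ (2:ℝ)^((2:ℕ):ℝ) :=
      Real.rpow_le_rpow_of_exponent_le (by norm_num) (by push_cast; linarith)
    rw [Real.rpow_natCast] at h20
    norm_num at h20 ⊢
    linarith
  have h2 : ∑ i ∈ Finset.Icc 2 t, ((i:ℝ)+1)^(2*α)/(i:ℝ)^2
      ≤ (9/4) * ((((t:ℝ)+1)^(2*α-1) - 1)/(2*α-1)) := by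
    calc ∑ i ∈ Finset.Icc 2 t, ((i:ℝ)+1)^(2*α)/(i:ℝ)^2
        ≤ ∑ i ∈ Finset.Icc 2 t, (9/4) * (i:ℝ)^(2*α-2) := by
          apply Finset.sum_le_sum
          intro i hi
          rw [Finset.mem_Icc] at hi
          exact rpow_div_le_94 (by linarith) hα1 hi.1
      _ = (9/4) * ∑ i ∈ Finset.Icc 2 t, (i:ℝ)^(2*α-2) := by rw [← Finset.mul_sum]
      _ ≤ (9/4) * (((t:ℝ)^(2*α-1) - 1)/(2*α-1)) := by
          have hs := sum_pos (p := 2*α-1) hβ (by linarith) t ht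
          rw [show (2*α-1-1 : ℝ) = 2*α-2 by ring] at hs
          nlinarith [hs]
      _ ≤ (9/4) * ((((t:ℝ)+1)^(2*α-1) - 1)/(2*α-1)) := by
          have hm : (t:ℝ)^(2*α-1) ≤ ((t:ℝ)+1)^(2*α-1) :=
            Real.rpow_le_rpow (by positivity) (by linarith) (by linarith)
          gcongr
  linarith
end cases

theorem psi_one_bound
    (α : ℝ) (hα : α ∈ Set.Ioc (0 : ℝ) 1) (t : ℕ)
    (ψ : ℝ)
    (hψ : ψ = ∑ i ∈ Finset.Icc 1 t, (1 / (i : ℝ) ^ 2) *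
        (∏ k ∈ Finset.Ioc i t, (1 - α / (k : ℝ))) ^ 2) :
    (α < 1/2 → ψ ≤ 4 / (1 - 2 * α) * ((t : ℝ) + 1) ^ (-(2 * α))) ∧
    (α = 1/2 → ψ ≤ 4 * ((t : ℝ) + 1)⁻¹ * Real.log ((t : ℝ) + 1)) ∧
    (1/2 < α → α < 1 → ψ ≤ 6 / (2 * α - 1) * ((t : ℝ) + 1)⁻¹) ∧
    (α = 1 → ψ ≤ 6 * ((t : ℝ) + 1)⁻¹) := by
  obtain ⟨hα0, hα1⟩ := hα
  rcases Nat.eq_zero_or_pos t with rfl | ht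
  · have hψ0 : ψ = 0 := by simpa using hψ
    refine ⟨?_, ?_, ?_, ?_⟩
    · intro h
      rw [hψ0]
      have hc : (0:ℝ) < 1 - 2*α := by linarith
      positivity
    · intro h
      rw [hψ0]
      norm_num
    · intro h _
      rw [hψ0]
      have hc : (0:ℝ) < 2*α - 1 := by linarith
      positivity
    · intro h
      rw [hψ0]
      norm_num
  · have ht1 : 1 ≤ t := ht
    have htR : (1:ℝ) ≤ (t:ℝ) + 1 := by
      have : (0:ℝ) ≤ (t:ℝ) := Nat.cast_nonneg t
      linarith
    have hB0 : (0:ℝ) < ((t:ℝ)+1)^(-(2*α)) := Real.rpow_pos_of_pos (by positivity) _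
    have hmain : ψ ≤ (∑ i ∈ Finset.Icc 1 t, ((i:ℝ)+1)^(2*α) / (i:ℝ)^2) *
        ((t:ℝ)+1)^(-(2*α)) := by
      rw [hψ]; exact psi_le_sum_mul hα0 hα1 t
    have hcase3 : 1/2 < α → ψ ≤ 6/(2*α-1)*(((t:ℝ)+1))⁻¹ := by
      intro hh
      have hβ : (0:ℝ) < 2*α-1 := by linarith
      have hS := sum_case3 hh hα1 t ht1
      have step : ψ ≤ (4 + (9/4) * ((((t:ℝ)+1)^(2*α-1) - 1)/(2*α-1))) *
          ((t:ℝ)+1)^(-(2*α)) :=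
        le_trans hmain (mul_le_mul_of_nonneg_right hS hB0.le)
      have hUB : ((t:ℝ)+1)^(2*α-1) * ((t:ℝ)+1)^(-(2*α)) = ((t:ℝ)+1)⁻¹ := by
        rw [← Real.rpow_add (by positivity), show (2*α-1) + -(2*α) = (-1 : ℝ) by ring,
          Real.rpow_neg_one]
      have hBA : ((t:ℝ)+1)^(-(2*α)) ≤ ((t:ℝ)+1)⁻¹ := by
        rw [← Real.rpow_neg_one]
        exact Real.rpow_le_rpow_of_exponent_le htR (by linarith)
      refine le_trans step ?_
      rw [show (6:ℝ)/(2*α-1)*(((t:ℝ)+1))⁻¹ = 6*(((t:ℝ)+1))⁻¹/(2*α-1) by ring,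
        le_div_iff₀ hβ]
      have e : (4 + (9/4) * ((((t:ℝ)+1)^(2*α-1) - 1)/(2*α-1))) * ((t:ℝ)+1)^(-(2*α)) * (2*α-1)
          = 4*(2*α-1)*((t:ℝ)+1)^(-(2*α))
            + (9/4)*(((t:ℝ)+1)^(2*α-1) * ((t:ℝ)+1)^(-(2*α)))
            - (9/4)*((t:ℝ)+1)^(-(2*α)) := by
        field_simp
        ring
      rw [e, hUB]
      nlinarith [mul_nonneg (sub_nonneg.2 (show 2*α-1 ≤ 1 by linarith)) hB0.le, hBA, hB0]
    refine ⟨?_, ?_, ?_, ?_⟩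
    · intro h
      have hc : (0:ℝ) < 1 - 2*α := by linarith
      have hS := sum_case1 hα0 h t ht1
      refine le_trans hmain (le_trans (mul_le_mul_of_nonneg_right hS hB0.le) ?_)
      apply mul_le_mul_of_nonneg_right _ hB0.le
      rw [le_div_iff₀ hc]
      have e : (2 + 2/(1-2*α)) * (1-2*α) = 2*(1-2*α) + 2 := by
        field_simp
      rw [e]
      linarith
    · intro h
      subst h
      norm_num [Real.rpow_neg_one] at hmain
      have hS := sum_case2 t
      norm_num at hS
      have hA0 : (0:ℝ) ≤ ((t:ℝ)+1)⁻¹ := by positivity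
      calc ψ ≤ (∑ i ∈ Finset.Icc 1 t, ((i:ℝ)+1) / (i:ℝ)^2) * ((t:ℝ)+1)⁻¹ := hmain
        _ ≤ (4 * Real.log ((t:ℝ)+1)) * ((t:ℝ)+1)⁻¹ :=
            mul_le_mul_of_nonneg_right hS hA0
        _ = 4 * ((t:ℝ)+1)⁻¹ * Real.log ((t:ℝ)+1) := by ring
    · intro h _
      exact hcase3 h
    · intro h
      subst h
      have := hcase3 (by norm_num)
      norm_num at this
      exact this
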